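/- Let m ≥ 2, ω = exp(−2πi/m), and for δ ∈ (ℤ_m)³ define T(δ) = Σ_{x∈X₁∪X₃} ω^{x·δ}. Then: |T(δ)| ≤ 2m² if δ = 0 or δ has only its second coordinate nonzero or only its third coordinate nonzero; |T(δ)| ≤ 2m if δ has only its first coordinate nonzero or has exactly two nonzero coordinates; and |T(δ)| ≤ 2 if all three coordinates of δ are nonzero. -/

import Mathlib

/-- `ω^k` where `ω = exp(-2πi/m)` and `k` is the canonical representative of
`x ∈ ℤ_m`. -/
noncomputable def zchar (m : ℕ) (x : ZMod m) : ℂ :=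
  Complex.exp ((-2) * (Real.pi : ℂ) * Complex.I * (x.val : ℂ) / (m : ℂ))

/-- The dot product `g·ξ` on `(ℤ_m)³`, computed in `ℤ_m`. -/
def dot3 {m : ℕ} (g ξ : ZMod m × ZMod m × ZMod m) : ZMod m :=
  g.1 * ξ.1 + g.2.1 * ξ.2.1 + g.2.2 * ξ.2.2

section aux
variable (m : ℕ) [NeZero m]

noncomputable def zzeta : ℂ := Complex.exp ((-2) * (Real.pi : ℂ) * Complex.I / (m : ℂ))

lemma zzeta_pow_m : zzeta m ^ m = 1 := by
  rw [zzeta, ← Complex.exp_nat_mul]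
  have hm : (m : ℂ) ≠ 0 := Nat.cast_ne_zero.mpr (NeZero.ne m)
  have : (m : ℂ) * ((-2) * (Real.pi : ℂ) * Complex.I / (m : ℂ))
      = (-1 : ℤ) * (2 * Real.pi * Complex.I) := by
    field_simp; ring
  rw [this, Complex.exp_int_mul_two_pi_mul_I]

noncomputable def zpsi : AddChar (ZMod m) ℂ := AddChar.zmodChar m (zzeta_pow_m m)

lemma zchar_eq (x : ZMod m) : zchar m x = zpsi m x := by
  rw [zpsi, AddChar.zmodChar_apply, zzeta, ← Complex.exp_nat_mul, zchar]
  congr 1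
  ring

lemma zpsi_ne_one {a : ZMod m} (ha : a ≠ 0) : zpsi m a ≠ 1 := by
  have hprim : IsPrimitiveRoot (zzeta m) m := by
    have h2 := (Complex.isPrimitiveRoot_exp m (NeZero.ne m)).inv
    have : (Complex.exp (2 * Real.pi * Complex.I / m))⁻¹ = zzeta m := by
      rw [← Complex.exp_neg, zzeta]; congr 1; ring
    rwa [this] at h2
  have hv0 : 0 < a.val := Nat.pos_of_ne_zero (fun h => ha ((ZMod.val_eq_zero a).mp h))
  exact hprim.pow_ne_one_of_pos_of_lt hv0.ne' (ZMod.val_lt a)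

/-- The nonzero elements. -/
def nz : Finset (ZMod m) := Finset.univ.filter (· ≠ 0)

lemma sum_nz (a : ZMod m) :
    ∑ x ∈ nz m, zpsi m (x * a) = (if a = 0 then (m : ℂ) else 0) - 1 := by
  have h0 : zpsi m ((0 : ZMod m) * a) = 1 := by rw [zero_mul, AddChar.map_zero_eq_one]
  have hnz : nz m = Finset.univ.erase (0 : ZMod m) := by
    ext x; simp [nz, Finset.mem_erase]
  have htot : ∑ x : ZMod m, zpsi m (x * a) = if a = 0 then (m : ℂ) else 0 := by
    split_ifs with h
    · simp [h, ZMod.card]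
    · have : ∑ x : ZMod m, zpsi m (x * a) = ∑ x, (AddChar.mulShift (zpsi m) a) x := by
        apply Finset.sum_congr rfl
        intro x _
        rw [AddChar.mulShift_apply, mul_comm]
      rw [this]
      apply AddChar.sum_eq_zero_of_ne_one
      intro hcon
      apply zpsi_ne_one m h
      have : (AddChar.mulShift (zpsi m) a) 1 = 1 := by rw [hcon]; rfl
      rwa [AddChar.mulShift_apply, mul_one] at this
  rw [hnz, Finset.sum_erase_eq_sub (Finset.mem_univ (0 : ZMod m)), htot, h0]

end aux

/-- Bounds on `T(δ) = Σ_{x ∈ X₁∪X₃} ω^{x·δ}`, where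
`X₁ = {(x,y,0) : x≠0, y≠0}` and `X₃ = {(x,0,y) : x≠0, y≠0}` in `(ℤ_m)³`:
`|T(δ)| ≤ 2m²` if `δ = 0` or only the 2nd or only the 3rd coordinate is nonzero;
`|T(δ)| ≤ 2m` if only the 1st coordinate is nonzero or exactly two are nonzero;
`|T(δ)| ≤ 2` if all three coordinates are nonzero. -/
theorem statement7 (m : ℕ) [NeZero m] (hm : 2 ≤ m)
    (δ : ZMod m × ZMod m × ZMod m) (T : ℂ)
    (hT : T = ∑ x ∈ Finset.univ.filter
        (fun g : ZMod m × ZMod m × ZMod m =>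
          (g.1 ≠ 0 ∧ g.2.1 ≠ 0 ∧ g.2.2 = 0) ∨ (g.1 ≠ 0 ∧ g.2.1 = 0 ∧ g.2.2 ≠ 0)),
        zchar m (dot3 x δ)) :
    ((δ = 0 ∨ (δ.1 = 0 ∧ δ.2.1 ≠ 0 ∧ δ.2.2 = 0) ∨ (δ.1 = 0 ∧ δ.2.1 = 0 ∧ δ.2.2 ≠ 0)) →
        ‖T‖ ≤ 2 * (m : ℝ) ^ 2) ∧
    (((δ.1 ≠ 0 ∧ δ.2.1 = 0 ∧ δ.2.2 = 0) ∨
      (δ.1 ≠ 0 ∧ δ.2.1 ≠ 0 ∧ δ.2.2 = 0) ∨ (δ.1 ≠ 0 ∧ δ.2.1 = 0 ∧ δ.2.2 ≠ 0) ∨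
      (δ.1 = 0 ∧ δ.2.1 ≠ 0 ∧ δ.2.2 ≠ 0)) →
        ‖T‖ ≤ 2 * (m : ℝ)) ∧
    ((δ.1 ≠ 0 ∧ δ.2.1 ≠ 0 ∧ δ.2.2 ≠ 0) → ‖T‖ ≤ 2) := by
  classical
  set Fr : ZMod m → ℝ := fun a => (if a = 0 then (m : ℝ) else 0) - 1 with hFr
  -- split the index set
  have hsplit : Finset.univ.filter
        (fun g : ZMod m × ZMod m × ZMod m =>
          (g.1 ≠ 0 ∧ g.2.1 ≠ 0 ∧ g.2.2 = 0) ∨ (g.1 ≠ 0 ∧ g.2.1 = 0 ∧ g.2.2 ≠ 0))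
      = nz m ×ˢ (nz m ×ˢ ({0} : Finset (ZMod m)))
        ∪ nz m ×ˢ (({0} : Finset (ZMod m)) ×ˢ nz m) := by
    ext g
    simp only [Finset.mem_filter, Finset.mem_univ, true_and, Finset.mem_union,
      Finset.mem_product, Finset.mem_singleton, nz, Finset.mem_filter]
    try tauto
  have hdisj : Disjoint (nz m ×ˢ (nz m ×ˢ ({0} : Finset (ZMod m))))
      (nz m ×ˢ (({0} : Finset (ZMod m)) ×ˢ nz m)) := by
    rw [Finset.disjoint_left]
    intro g hg hg'
    simp only [Finset.mem_product, Finset.mem_singleton, nz, Finset.mem_filter,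
      Finset.mem_univ, true_and] at hg hg'
    exact hg.2.1 hg'.2.1
  have hpart : ∀ a b : ZMod m,
      (∑ x ∈ nz m, ∑ y ∈ nz m, zpsi m (x * a + y * b))
        = ((if a = 0 then (m : ℂ) else 0) - 1) * ((if b = 0 then (m : ℂ) else 0) - 1) := by
    intro a b
    rw [← sum_nz m a, ← sum_nz m b, Finset.sum_mul_sum]
    apply Finset.sum_congr rfl
    intro x _
    apply Finset.sum_congr rfl
    intro y _
    rw [AddChar.map_add_eq_mul]
  have hT2 : T = ((if δ.1 = 0 then (m : ℂ) else 0) - 1) * ((if δ.2.1 = 0 then (m : ℂ) else 0) - 1)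
      + ((if δ.1 = 0 then (m : ℂ) else 0) - 1) * ((if δ.2.2 = 0 then (m : ℂ) else 0) - 1) := by
    rw [hT, hsplit, Finset.sum_union hdisj]
    congr 1
    · rw [Finset.sum_product, ← hpart δ.1 δ.2.1]
      apply Finset.sum_congr rfl
      intro x _
      rw [Finset.sum_product]
      apply Finset.sum_congr rfl
      intro y _
      rw [Finset.sum_singleton, zchar_eq]
      congr 1
      simp [dot3]
    · rw [Finset.sum_product, ← hpart δ.1 δ.2.2]
      apply Finset.sum_congr rfl
      intro x _
      rw [Finset.sum_product, Finset.sum_singleton]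
      apply Finset.sum_congr rfl
      intro y _
      rw [zchar_eq]
      congr 1
      simp [dot3]
  have hTr : T = ((Fr δ.1 * Fr δ.2.1 + Fr δ.1 * Fr δ.2.2 : ℝ) : ℂ) := by
    rw [hT2, hFr]
    push_cast
    split_ifs <;> push_cast <;> ring
  have habs : ‖T‖ = |Fr δ.1 * Fr δ.2.1 + Fr δ.1 * Fr δ.2.2| := by
    rw [hTr, Complex.norm_real, Real.norm_eq_abs]
  have hM : (2 : ℝ) ≤ (m : ℝ) := by exact_mod_cast hm
  have hF0 : ∀ a : ZMod m, a = 0 → Fr a = (m : ℝ) - 1 := by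
    intro a h; simp [hFr, h]
  have hF1 : ∀ a : ZMod m, a ≠ 0 → Fr a = -1 := by
    intro a h; simp [hFr, h]
  refine ⟨?_, ?_, ?_⟩
  · rintro (rfl | ⟨h1, h2, h3⟩ | ⟨h1, h2, h3⟩)
    · simp only [Prod.fst_zero, Prod.snd_zero] at habs
      rw [habs, hF0 _ rfl, abs_le]
      constructor <;> nlinarith
    · rw [habs, hF0 _ h1, hF1 _ h2, hF0 _ h3, abs_le]
      constructor <;> nlinarith
    · rw [habs, hF0 _ h1, hF0 _ h2, hF1 _ h3, abs_le]
      constructor <;> nlinarith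
  · rintro (⟨h1, h2, h3⟩ | ⟨h1, h2, h3⟩ | ⟨h1, h2, h3⟩ | ⟨h1, h2, h3⟩)
    · rw [habs, hF1 _ h1, hF0 _ h2, hF0 _ h3, abs_le]
      constructor <;> nlinarith
    · rw [habs, hF1 _ h1, hF1 _ h2, hF0 _ h3, abs_le]
      constructor <;> nlinarith
    · rw [habs, hF1 _ h1, hF0 _ h2, hF1 _ h3, abs_le]
      constructor <;> nlinarith
    · rw [habs, hF0 _ h1, hF1 _ h2, hF1 _ h3, abs_le]
      constructor <;> nlinarith
  · rintro ⟨h1, h2, h3⟩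
    rw [habs, hF1 _ h1, hF1 _ h2, hF1 _ h3, abs_le]
    constructor <;> nlinarith
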